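/- Let S₀ be a sine-type function of type b with asymptotically separated zeros {z_n^0}_{n≥1}, let {κ_n}_{n≥1} ∈ l₂, and set z_n := z_n^0 + κ_n. Then for every δ > 0 the infinite product G(z) := ∏_{n=1}^{∞} (z − z_n^0)/(z − z_n) is uniformly bounded on the set {z ∈ ℂ : dist(z, {z_n}_{n≥1}) ≥ δ}; i.e., there exists a constant C (depending on δ and the data) with |G(z)| ≤ C for all such z. -/

import Mathlib

open MeasureTheory Complex Set
open scoped ENNReal Real Classical

/-- The order of the zero of `f` at `z` (with junk value `0` if `f` is not analytic at `z`). -/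
noncomputable def zeroOrder (f : ℂ → ℂ) (z : ℂ) : ℕ∞ :=
  if _h : AnalyticAt ℂ f z then analyticOrderAt f z else 0

/-- The sequence `zs` enumerates all the zeros of `f`, counted with multiplicity. -/
def EnumeratesZeros (f : ℂ → ℂ) (zs : ℕ → ℂ) : Prop :=
  ∀ z : ℂ, {n | zs n = z}.Finite ∧ zeroOrder f z = ({n | zs n = z}.ncard : ℕ∞)

/-- `f` is of exponential type. -/
def ExpType (f : ℂ → ℂ) : Prop :=
  ∃ A B : ℝ, ∀ z : ℂ, ‖f z‖ ≤ A * Real.exp (B * ‖z‖)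

/-- `S0` is a sine-type function of type `b`: an entire function of exponential type
satisfying the two-sided bound (6). -/
def IsSineType (b : ℝ) (S0 : ℂ → ℂ) : Prop :=
  Differentiable ℂ S0 ∧ ExpType S0 ∧
    ∃ c C K : ℝ, 0 < c ∧ 0 < C ∧ 0 < K ∧ ∀ z : ℂ, K < |z.im| →
      c < ‖S0 z‖ * Real.exp (-b * |z.im|) ∧ ‖S0 z‖ * Real.exp (-b * |z.im|) < C

/-- The sequence `z0` is asymptotically separated:
`inf |z0 n - z0 k| > 0` over `n ≠ k` with `n, k` sufficiently large. -/
def AsympSeparated (z0 : ℕ → ℂ) : Prop :=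
  ∃ n₀ : ℕ, ∃ d : ℝ, 0 < d ∧ ∀ n k : ℕ, n₀ ≤ n → n₀ ≤ k → n ≠ k → d ≤ ‖z0 n - z0 k‖

/-- The transform `∫_{-b}^{b} w(x) e^{izx} dx`. -/
noncomputable def fourierPart (b : ℝ) (w : ℝ → ℂ) (z : ℂ) : ℂ :=
  ∫ x in (-b)..b, w x * Complex.exp (Complex.I * z * x)

/-- `μ_n` from (9): `μ n = z0 n` if `z0 n ≠ 0` and `μ n = -1` otherwise.
Here the index `n : ℕ` corresponds to the index `n + 1 - N` of the paper. -/
noncomputable def mu (z0 : ℕ → ℂ) (n : ℕ) : ℂ := if z0 n = 0 then -1 else z0 n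

lemma floor_abs_lt {s x y : ℝ} (hs : 0 < s) (h : ⌊x/s⌋ = ⌊y/s⌋) : |x - y| < s := by
  have hx1 : (⌊x/s⌋ : ℝ) ≤ x/s := Int.floor_le _
  have hx2 : x/s < ⌊x/s⌋ + 1 := Int.lt_floor_add_one _
  have hy1 : (⌊x/s⌋ : ℝ) ≤ y/s := by rw [h]; exact Int.floor_le _
  have hy2 : y/s < ⌊x/s⌋ + 1 := by rw [h]; exact Int.lt_floor_add_one _
  have h1 : |x/s - y/s| < 1 := by rw [abs_sub_lt_iff]; constructor <;> linarith
  have h2 : x/s - y/s = (x - y)/s := by ring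
  rw [h2, abs_div, abs_of_pos hs, div_lt_one hs] at h1
  exact h1

noncomputable def hfun (s δ : ℝ) (m : ℤ) : ℝ :=
  if m.natAbs ≤ 1 then (δ^2)⁻¹ else ((s * ((m.natAbs : ℝ) - 1))^2)⁻¹

lemma hfun_nonneg (s δ : ℝ) (m : ℤ) : 0 ≤ hfun s δ m := by
  unfold hfun; split <;> positivity

lemma hfun_summable {s : ℝ} (hs : 0 < s) (δ : ℝ) : Summable (hfun s δ) := by
  have h1 : Summable (fun n : ℕ => ((n:ℝ)^2)⁻¹) := Real.summable_nat_pow_inv.mpr one_lt_two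
  have base : Summable (fun n : ℕ => (((n:ℝ)+1)^2)⁻¹) := by
    have h2 := (summable_nat_add_iff 1).mpr h1
    exact h2.congr (fun n => by push_cast; ring)
  have base2 : Summable (fun n : ℕ => ((s * ((n:ℝ)+1))^2)⁻¹) := by
    have h3 := base.mul_left ((s^2)⁻¹)
    exact h3.congr (fun n => by rw [mul_pow, mul_inv])
  have natside : Summable (fun n : ℕ => hfun s δ (n : ℤ)) := by
    rw [← summable_nat_add_iff 2]
    apply base2.congr
    intro n
    simp only [hfun]
    rw [show ((n + 2 : ℕ) : ℤ).natAbs = n + 2 by omega, if_neg (by omega)]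
    push_cast
    ring_nf
  have negside : Summable (fun n : ℕ => hfun s δ (-(n : ℤ))) := by
    apply natside.congr
    intro n
    simp only [hfun, Int.natAbs_neg]
  exact Summable.of_nat_of_neg natside negside

set_option maxHeartbeats 1600000 in
/-- The infinite product `G(z) = ∏_n (z - z_n⁰)/(z - z_n)`, where `z_n = z_n⁰ + κ_n`
with `{κ_n} ∈ l₂` and `{z_n⁰}` the asymptotically separated zeros of a sine-type
function, is uniformly bounded on `{z : dist(z, {z_n}) ≥ δ}`. -/
theorem product_G_uniformly_bounded
    (b : ℝ) (hb : 0 < b)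
    (S0 : ℂ → ℂ) (hS0 : IsSineType b S0)
    (z0 : ℕ → ℂ) (hz0 : EnumeratesZeros S0 z0) (hsep : AsympSeparated z0)
    (κ : ℕ → ℂ) (hκ : Summable (fun n => ‖κ n‖ ^ 2))
    (zn : ℕ → ℂ) (hzn : ∀ n : ℕ, zn n = z0 n + κ n)
    (δ : ℝ) (hδ : 0 < δ) :
    ∃ C : ℝ, 0 < C ∧ ∀ z : ℂ, (∀ n : ℕ, δ ≤ dist z (zn n)) →
      Multipliable (fun n : ℕ => (z - z0 n) / (z - zn n)) ∧
      ‖∏' n : ℕ, (z - z0 n) / (z - zn n)‖ ≤ C := by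

  classical
  obtain ⟨hdiff, -, c, Cb, K, hc, hCb, hK, hbd⟩ := hS0
  obtain ⟨n₀, d, hd, hsepd⟩ := hsep
  -- imaginary parts of z0 are bounded by K
  have hIm0 : ∀ n, |(z0 n).im| ≤ K := by
    intro n
    by_contra hcon
    push_neg at hcon
    have h1 := (hbd (z0 n) hcon).1
    have hne : S0 (z0 n) ≠ 0 := by
      intro h0
      rw [h0, norm_zero, zero_mul] at h1
      exact absurd h1 (not_lt.mpr hc.le)
    have han : AnalyticAt ℂ S0 (z0 n) := hdiff.analyticAt _
    have hord : zeroOrder S0 (z0 n) = 0 := by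
      unfold zeroOrder
      rw [dif_pos han]
      rw [show (0 : ℕ∞) = ((0 : ℕ) : ℕ∞) from rfl, han.analyticOrderAt_eq_natCast]
      exact ⟨S0, han, hne, by filter_upwards with w; simp⟩
    have h2 := (hz0 (z0 n)).2
    rw [hord] at h2
    have hfin := (hz0 (z0 n)).1
    have hmem : n ∈ {k | z0 k = z0 n} := rfl
    have hcard : {k | z0 k = z0 n}.ncard = 0 := Nat.cast_eq_zero.mp h2.symm
    rw [(Set.ncard_eq_zero hfin)] at hcard
    rw [hcard] at hmem
    exact hmem
  set s : ℝ := d/4 with hs_def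
  have hs : 0 < s := by positivity
  set Sk := ∑' n, ‖κ n‖^2 with hSk
  have hSk0 : 0 ≤ Sk := tsum_nonneg (fun n => by positivity)
  have hκle : ∀ n, ‖κ n‖ ≤ Real.sqrt Sk := by
    intro n
    have h1 : ‖κ n‖^2 ≤ Sk := Summable.le_tsum hκ n (fun j _ => by positivity)
    calc ‖κ n‖ = Real.sqrt (‖κ n‖^2) := (Real.sqrt_sq (norm_nonneg _)).symm
    _ ≤ Real.sqrt Sk := Real.sqrt_le_sqrt h1
  set H : ℝ := K + Real.sqrt Sk with hH_def
  have hImzn : ∀ n, |(zn n).im| ≤ H := by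
    intro n
    rw [hzn n]
    calc |(z0 n + κ n).im| = |(z0 n).im + (κ n).im| := by rw [Complex.add_im]
    _ ≤ |(z0 n).im| + |(κ n).im| := abs_add_le _ _
    _ ≤ K + Real.sqrt Sk := add_le_add (hIm0 n)
        ((Complex.abs_im_le_norm _).trans (hκle n))
  -- choose N
  have htend : Filter.Tendsto (fun n => ‖κ n‖^2) Filter.atTop (nhds 0) := hκ.tendsto_atTop_zero
  have hev : ∀ᶠ n in Filter.atTop, ‖κ n‖^2 < s^2 :=
    htend.eventually_lt_const (by positivity)
  obtain ⟨N₁, hN₁⟩ := Filter.eventually_atTop.mp hev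
  set N := max N₁ n₀ with hN_def
  have hκs : ∀ n, N ≤ n → ‖κ n‖ < s := by
    intro n hn
    have h1 := hN₁ n (le_trans (le_max_left _ _) hn)
    nlinarith [norm_nonneg (κ n)]
  have hsepzn : ∀ m n, N ≤ m → N ≤ n → m ≠ n → d/2 ≤ ‖zn m - zn n‖ := by
    intro m n hm hn hmn
    have h1 := hsepd m n (le_trans (le_max_right _ _) hm) (le_trans (le_max_right _ _) hn) hmn
    have h2 := hκs m hm
    have h3 := hκs n hn
    have heq : zn m - zn n = (z0 m - z0 n) + (κ m - κ n) := by rw [hzn, hzn]; ring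
    rw [heq]
    have h4 : ‖z0 m - z0 n‖ ≤ ‖(z0 m - z0 n) + (κ m - κ n)‖ + ‖κ m - κ n‖ := by
      calc ‖z0 m - z0 n‖ = ‖((z0 m - z0 n) + (κ m - κ n)) - (κ m - κ n)‖ := by congr 1; ring
      _ ≤ _ := norm_sub_le _ _
    have h5 : ‖κ m - κ n‖ ≤ ‖κ m‖ + ‖κ n‖ := norm_sub_le _ _
    have hs4 : s = d/4 := hs_def
    linarith
  set M : ℕ := ⌈H/s⌉₊ + 1 with hM_def
  set Hsum := ∑' m : ℤ, hfun s δ m with hHsum_def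
  have hHsumS := hfun_summable hs δ
  have hHsum0 : 0 ≤ Hsum := tsum_nonneg (hfun_nonneg s δ)
  set Cf : ℝ := N * (δ^2)⁻¹ + (2*M+1) * Hsum with hCf_def
  refine ⟨Real.exp ((Sk + Cf)/2), Real.exp_pos _, ?_⟩
  intro z hz
  have hzd : ∀ n, δ ≤ ‖z - zn n‖ := by intro n; rw [← dist_eq_norm]; exact hz n
  have hzne : ∀ n, z - zn n ≠ 0 := by
    intro n h0
    have := hzd n
    rw [h0, norm_zero] at this
    linarith
  -- key uniform finite-sum bound
  have key : ∀ F : Finset ℕ, ∑ n ∈ F, (‖z - zn n‖^2)⁻¹ ≤ Cf := by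
    intro F
    rw [← Finset.sum_filter_add_sum_filter_not F (fun n => n < N)]
    have part1 : ∑ n ∈ F.filter (fun n => n < N), (‖z - zn n‖^2)⁻¹ ≤ N * (δ^2)⁻¹ := by
      have hsub : F.filter (fun n => n < N) ⊆ Finset.range N := by
        intro n hn
        exact Finset.mem_range.mpr (Finset.mem_filter.mp hn).2
      calc ∑ n ∈ F.filter (fun n => n < N), (‖z - zn n‖^2)⁻¹
          ≤ ∑ _n ∈ F.filter (fun n => n < N), (δ^2)⁻¹ := by
            apply Finset.sum_le_sum
            intro n _
            apply inv_anti₀ (by positivity)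
            nlinarith [hzd n, norm_nonneg (z - zn n)]
      _ = (F.filter (fun n => n < N)).card * (δ^2)⁻¹ := by
            rw [Finset.sum_const, nsmul_eq_mul]
      _ ≤ N * (δ^2)⁻¹ := by
            have hc1 := Finset.card_le_card hsub
            rw [Finset.card_range] at hc1
            apply mul_le_mul_of_nonneg_right _ (by positivity)
            exact_mod_cast hc1
    have part2 : ∑ n ∈ F.filter (fun n => ¬ n < N), (‖z - zn n‖^2)⁻¹ ≤ (2*M+1) * Hsum := by
      set F2 := F.filter (fun n => ¬ n < N) with hF2_def
      have hF2 : ∀ n ∈ F2, N ≤ n := by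
        intro n hn
        exact not_lt.mp (Finset.mem_filter.mp hn).2
      set a : ℕ → ℤ := fun n => ⌊((zn n).re - z.re)/s⌋ with ha_def
      set bf : ℕ → ℤ := fun n => ⌊(zn n).im/s⌋ with hbf_def
      have hinj : ∀ m ∈ F2, ∀ n ∈ F2, (a m, bf m) = (a n, bf n) → m = n := by
        intro m hm n hn hEq
        by_contra hmn
        have h1 := hsepzn m n (hF2 m hm) (hF2 n hn) hmn
        have hre : |((zn m).re - z.re) - ((zn n).re - z.re)| < s :=
          floor_abs_lt hs (by simpa [ha_def] using congrArg Prod.fst hEq)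
        have him : |(zn m).im - (zn n).im| < s :=
          floor_abs_lt hs (by simpa [hbf_def] using congrArg Prod.snd hEq)
        have hnorm : ‖zn m - zn n‖ ≤ |(zn m - zn n).re| + |(zn m - zn n).im| := by
          exact Complex.norm_le_abs_re_add_abs_im _
        have hre2 : (zn m - zn n).re = ((zn m).re - z.re) - ((zn n).re - z.re) := by
          rw [Complex.sub_re]; ring
        have him2 : (zn m - zn n).im = (zn m).im - (zn n).im := by rw [Complex.sub_im]
        rw [hre2, him2] at hnorm
        have hs4 : s = d/4 := hs_def
        linarith
      have hterm : ∀ n ∈ F2, (‖z - zn n‖^2)⁻¹ ≤ hfun s δ (a n) := by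
        intro n _
        unfold hfun
        split_ifs with hcase
        · apply inv_anti₀ (by positivity)
          nlinarith [hzd n, norm_nonneg (z - zn n)]
        · push_neg at hcase
          have h2k : 2 ≤ (a n).natAbs := hcase
          have h1 : ((a n):ℝ) ≤ ((zn n).re - z.re)/s := Int.floor_le _
          have h2 : ((zn n).re - z.re)/s < (a n) + 1 := Int.lt_floor_add_one _
          have hxle : |(zn n).re - z.re| ≤ ‖z - zn n‖ := by
            have he : (zn n).re - z.re = -((z - zn n).re) := by rw [Complex.sub_re]; ring
            rw [he, abs_neg]
            exact Complex.abs_re_le_norm _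
          have hlow : s * (((a n).natAbs : ℝ) - 1) ≤ |(zn n).re - z.re| := by
            have h1' : ((a n):ℝ) * s ≤ (zn n).re - z.re := by
              rw [← le_div_iff₀ hs]; exact h1
            have h2' : (zn n).re - z.re < (((a n):ℝ) + 1) * s := by
              rw [← div_lt_iff₀ hs]; exact h2
            rcases le_or_gt 0 (a n) with hk0 | hk0
            · have hna : (((a n).natAbs : ℝ)) = ((a n) : ℝ) := by
                rw [Nat.cast_natAbs, Int.cast_abs]
                exact _root_.abs_of_nonneg (by exact_mod_cast hk0)
              have hka : (2:ℝ) ≤ ((a n):ℝ) := by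
                exact_mod_cast (by omega : (2:ℤ) ≤ a n)
              have hx0 : 0 ≤ (zn n).re - z.re := le_trans (by nlinarith) h1'
              rw [_root_.abs_of_nonneg hx0, hna]
              nlinarith
            · have hna : (((a n).natAbs : ℝ)) = -((a n) : ℝ) := by
                rw [Nat.cast_natAbs, Int.cast_abs]
                exact abs_of_neg (by exact_mod_cast hk0)
              have hka : ((a n):ℝ) ≤ -2 := by
                exact_mod_cast (by omega : (a n) ≤ -2)
              have hx0 : (zn n).re - z.re ≤ 0 := le_trans h2'.le (by nlinarith)
              rw [_root_.abs_of_nonpos hx0, hna]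
              nlinarith
          have hpos : 0 < s * (((a n).natAbs : ℝ) - 1) := by
            have : (2:ℝ) ≤ ((a n).natAbs : ℝ) := by exact_mod_cast h2k
            nlinarith
          apply inv_anti₀ (by positivity)
          nlinarith [hxle, hlow, norm_nonneg (z - zn n), abs_nonneg ((zn n).re - z.re)]
      have hmemIcc : ∀ n : ℕ, bf n ∈ Finset.Icc (-(M:ℤ)) (M:ℤ) := by
        intro n
        have him := hImzn n
        have hHM : H/s ≤ (M:ℝ) := by
          calc H/s ≤ (⌈H/s⌉₊ : ℝ) := Nat.le_ceil _
          _ ≤ (M:ℝ) := by rw [hM_def]; push_cast; linarith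
        have habs := abs_le.mp him
        have hHMs : H ≤ (M:ℝ) * s := (div_le_iff₀ hs).mp hHM
        rw [Finset.mem_Icc]
        constructor
        · show -(M:ℤ) ≤ ⌊(zn n).im/s⌋
          rw [Int.le_floor]
          push_cast
          rw [le_div_iff₀ hs]
          have hMr : ((M:ℕ):ℝ) = (⌈H/s⌉₊:ℝ) + 1 := by rw [hM_def]; push_cast; ring
          rw [hMr] at hHMs ⊢
          linarith [habs.1]
        · show ⌊(zn n).im/s⌋ ≤ (M:ℤ)
          have hfl : ((⌊(zn n).im/s⌋ : ℤ) : ℝ) ≤ (zn n).im/s := Int.floor_le _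
          have hdiv : (zn n).im/s ≤ H/s :=
            (div_le_div_iff_of_pos_right hs).mpr (le_trans (le_abs_self _) him)
          have : ((⌊(zn n).im/s⌋ : ℤ) : ℝ) ≤ (M:ℝ) := le_trans hfl (le_trans hdiv hHM)
          exact_mod_cast this
      calc ∑ n ∈ F2, (‖z - zn n‖^2)⁻¹ ≤ ∑ n ∈ F2, hfun s δ (a n) := Finset.sum_le_sum hterm
      _ = ∑ p ∈ F2.image (fun n => (a n, bf n)), hfun s δ p.1 := by
            rw [Finset.sum_image hinj]
      _ ≤ ∑ p ∈ ((F2.image fun n => (a n, bf n)).image Prod.fst) ×ˢ Finset.Icc (-(M:ℤ)) (M:ℤ),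
            hfun s δ p.1 := by
            apply Finset.sum_le_sum_of_subset_of_nonneg
            · intro p hp
              obtain ⟨n, hn, hpn⟩ := Finset.mem_image.mp hp
              rw [Finset.mem_product]
              refine ⟨Finset.mem_image_of_mem _ hp, ?_⟩
              rw [← hpn]
              exact hmemIcc n
            · intro p _ _
              exact hfun_nonneg s δ _
      _ = ∑ q ∈ ((F2.image fun n => (a n, bf n)).image Prod.fst),
            (Finset.Icc (-(M:ℤ)) (M:ℤ)).card • hfun s δ q := by
            rw [Finset.sum_product]
            exact Finset.sum_congr rfl (fun q _ => by simp [Finset.sum_const])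
      _ ≤ (2*M+1) * Hsum := by
            have hcard : (Finset.Icc (-(M:ℤ)) (M:ℤ)).card = 2*M+1 := by
              rw [Int.card_Icc]
              omega
            rw [hcard]
            have : ∑ q ∈ ((F2.image fun n => (a n, bf n)).image Prod.fst),
                (2*M+1) • hfun s δ q
                = (2*M+1 : ℝ) * ∑ q ∈ ((F2.image fun n => (a n, bf n)).image Prod.fst),
                  hfun s δ q := by
              rw [Finset.mul_sum]
              exact Finset.sum_congr rfl (fun q _ => by rw [nsmul_eq_mul]; push_cast; ring)
            rw [this]
            apply mul_le_mul_of_nonneg_left _ (by positivity)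
            exact Summable.sum_le_tsum _ (fun m _ => hfun_nonneg s δ m) hHsumS
    linarith
  have hfsum : Summable (fun n => (‖z - zn n‖^2)⁻¹) :=
    summable_of_sum_le (fun n => by positivity) key
  have hfts : ∑' n, (‖z - zn n‖^2)⁻¹ ≤ Cf := Summable.tsum_le_of_sum_le hfsum key
  set w : ℕ → ℂ := fun n => κ n / (z - zn n) with hw_def
  have hwle : ∀ n, ‖w n‖ ≤ (‖κ n‖^2 + (‖z - zn n‖^2)⁻¹)/2 := by
    intro n
    have h1 : 0 < ‖z - zn n‖ := lt_of_lt_of_le hδ (hzd n)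
    have h2 : ‖w n‖ = ‖κ n‖ * (‖z - zn n‖)⁻¹ := by
      rw [hw_def]; simp only []; rw [norm_div, div_eq_mul_inv]
    have h3 : ((‖z - zn n‖^2))⁻¹ = ((‖z - zn n‖)⁻¹)^2 := by rw [inv_pow]
    rw [h2, h3]
    nlinarith [sq_nonneg (‖κ n‖ - (‖z - zn n‖)⁻¹), norm_nonneg (κ n), inv_pos.mpr h1]
  have hmaj : Summable (fun n => (‖κ n‖^2 + (‖z - zn n‖^2)⁻¹)/2) := (hκ.add hfsum).div_const 2
  have hwsum : Summable (fun n => ‖w n‖) :=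
    Summable.of_nonneg_of_le (fun n => norm_nonneg _) hwle hmaj
  have hwts : ∑' n, ‖w n‖ ≤ (Sk + Cf)/2 := by
    calc ∑' n, ‖w n‖ ≤ ∑' n, (‖κ n‖^2 + (‖z - zn n‖^2)⁻¹)/2 := Summable.tsum_le_tsum hwle hwsum hmaj
    _ = (∑' n, (‖κ n‖^2 + (‖z - zn n‖^2)⁻¹))/2 := tsum_div_const
    _ = (Sk + ∑' n, (‖z - zn n‖^2)⁻¹)/2 := by rw [Summable.tsum_add hκ hfsum]
    _ ≤ (Sk + Cf)/2 := by linarith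
  have hfac : ∀ n, (z - z0 n)/(z - zn n) = 1 + w n := by
    intro n
    have h1 : z - z0 n = (z - zn n) + κ n := by rw [hzn]; ring
    rw [h1, add_div, div_self (hzne n)]
  have hmult : Multipliable (fun n : ℕ => (z - z0 n)/(z - zn n)) := by
    by_cases hzero : ∃ n, z = z0 n
    · obtain ⟨n₁, hn₁⟩ := hzero
      refine ⟨0, ?_⟩
      rw [HasProd]
      apply Filter.Tendsto.congr' _ tendsto_const_nhds
      filter_upwards [Filter.eventually_ge_atTop {n₁}] with F hF
      refine (Finset.prod_eq_zero (Finset.singleton_subset_iff.mp hF) ?_).symm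
      rw [← hn₁, sub_self, zero_div]
    · push_neg at hzero
      have hne2 : ∀ n, (z - z0 n)/(z - zn n) ≠ 0 := fun n =>
        div_ne_zero (sub_ne_zero.mpr (hzero n)) (hzne n)
      have hlog : Summable (fun n => Complex.log ((z - z0 n)/(z - zn n))) := by
        have hsmall : ∀ᶠ n in Filter.cofinite, ‖w n‖ ≤ 1/2 := by
          rw [Nat.cofinite_eq_atTop]
          have ht0 := hwsum.tendsto_atTop_zero
          exact (ht0.eventually_lt_const (by norm_num : (0:ℝ) < 1/2)).mono (fun n h => h.le)
        apply Summable.of_norm_bounded_eventually (hwsum.mul_left (3/2))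
        filter_upwards [hsmall] with n hn
        rw [hfac n]
        exact Complex.norm_log_one_add_half_le_self hn
      exact Complex.multipliable_of_summable_log hlog
  refine ⟨hmult, ?_⟩
  have hp := hmult.hasProd.norm
  have hnormt : Filter.Tendsto (fun F : Finset ℕ => ∏ n ∈ F, ‖(z - z0 n)/(z - zn n)‖)
      Filter.atTop (nhds ‖∏' n : ℕ, (z - z0 n)/(z - zn n)‖) := hp
  apply le_of_tendsto' hnormt
  intro F
  calc ∏ n ∈ F, ‖(z - z0 n)/(z - zn n)‖
      ≤ ∏ n ∈ F, Real.exp ‖w n‖ := by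
        apply Finset.prod_le_prod (fun n _ => norm_nonneg _)
        intro n _
        rw [hfac n]
        calc ‖1 + w n‖ ≤ ‖(1:ℂ)‖ + ‖w n‖ := norm_add_le _ _
        _ = ‖w n‖ + 1 := by rw [norm_one]; ring
        _ ≤ Real.exp ‖w n‖ := Real.add_one_le_exp _
  _ = Real.exp (∑ n ∈ F, ‖w n‖) := (Real.exp_sum F _).symm
  _ ≤ Real.exp ((Sk + Cf)/2) := by
      apply Real.exp_le_exp.mpr
      exact le_trans (Summable.sum_le_tsum F (fun n _ => norm_nonneg _) hwsum) hwts
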